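/- For 0 < α < 1 and λ > 0, the Mittag-Leffler function admits the integral representation α E_α(-λ x^α) = x ∫₀^∞ f_α(x|t) t^{-1} e^{-λ t} dt for all x > 0, where f_α(x|t) = f_α(x t^{-1/α}) t^{-1/α} is the scaled one-sided stable density. -/

import Mathlib

open Real MeasureTheory Set Filter
open scoped ENNReal NNReal

/-- Gamma lower bound from log-convexity: for `n ≥ 1` (nat) and `x ≥ n + 1`,
`Γ x ≥ n! * n ^ (x - (n+1))`. -/
lemma gamma_lower (n : ℕ) (hn : 1 ≤ n) {x : ℝ} (hx : (n : ℝ) + 1 < x) :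
    (n.factorial : ℝ) * (n : ℝ) ^ (x - (n + 1)) ≤ Real.Gamma x := by
  have hn0 : (0:ℝ) < n := by exact_mod_cast hn
  have h1 : ((n:ℝ)) ∈ Ioi (0:ℝ) := hn0
  have h2 : x ∈ Ioi (0:ℝ) := by simp only [mem_Ioi]; linarith
  have hslope := Real.convexOn_log_Gamma.slope_mono_adjacent h1 h2
      (by linarith : (n:ℝ) < (n:ℝ) + 1) hx
  have hΓn : Real.Gamma ((n:ℝ)) > 0 := Real.Gamma_pos_of_pos hn0
  have hΓn1 : Real.Gamma ((n:ℝ) + 1) = n * Real.Gamma n := Real.Gamma_add_one hn0.ne'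
  have hfact : Real.Gamma ((n:ℝ) + 1) = n.factorial := by
    exact_mod_cast Real.Gamma_nat_eq_factorial n
  have hΓx : Real.Gamma x > 0 := Real.Gamma_pos_of_pos h2
  simp only [Function.comp] at hslope
  -- hslope : (log Γ(n+1) - log Γ n)/((n+1)-n) ≤ (log Γ x - log Γ(n+1))/(x-(n+1))
  have hd : (0:ℝ) < x - ((n:ℝ)+1) := by linarith
  have hlogstep : Real.log (Real.Gamma ((n:ℝ)+1)) - Real.log (Real.Gamma n) = Real.log n := by
    rw [hΓn1, Real.log_mul hn0.ne' hΓn.ne']; ring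
  rw [show ((n:ℝ)+1) - n = 1 by ring, div_one, hlogstep] at hslope
  have h3 : Real.log n * (x - ((n:ℝ)+1)) ≤ Real.log (Real.Gamma x) - Real.log (Real.Gamma ((n:ℝ)+1)) := by
    calc Real.log n * (x - ((n:ℝ)+1))
        ≤ (Real.log (Real.Gamma x) - Real.log (Real.Gamma ((n:ℝ)+1))) / (x - ((n:ℝ)+1)) * (x - ((n:ℝ)+1)) := by
          exact mul_le_mul_of_nonneg_right hslope hd.le
      _ = _ := by field_simp
  have := Real.exp_le_exp.mpr (by linarith : Real.log n * (x - ((n:ℝ)+1)) + Real.log (Real.Gamma ((n:ℝ)+1)) ≤ Real.log (Real.Gamma x))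
  rw [Real.exp_add, Real.exp_log hΓx] at this
  calc (n.factorial : ℝ) * (n:ℝ) ^ (x - ((n:ℝ)+1))
      = Real.exp (Real.log n * (x - ((n:ℝ)+1))) * Real.exp (Real.log (Real.Gamma ((n:ℝ)+1))) := by
        rw [Real.exp_log (by rw [hfact]; positivity), hfact]
        rw [← Real.rpow_def_of_pos hn0, mul_comm]
    _ ≤ Real.Gamma x := this

/-- Summability of the Mittag-Leffler series at nonneg argument. -/
lemma summable_ml {α : ℝ} (hα : 0 < α) {c : ℝ} (hc : 0 ≤ c) :
    Summable (fun k : ℕ => c ^ k / Real.Gamma (α * k + 1)) := by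
  -- choose n with n ≥ 1 and n^α ≥ 2c+2
  obtain ⟨n, hn⟩ := exists_nat_ge (max 1 ((2*c+2) ^ (1/α)))
  have hn1 : 1 ≤ n := by
    have := le_trans (le_max_left _ _) hn
    exact_mod_cast Nat.one_le_cast.mp (by exact_mod_cast this)
  have hn0 : (0:ℝ) < n := by exact_mod_cast hn1
  have hpow : 2*c + 2 ≤ (n:ℝ) ^ α := by
    have h1 : ((2*c+2) ^ (1/α) : ℝ) ≤ n := le_trans (le_max_right _ _) hn
    have h2 : ((2*c+2) ^ (1/α)) ^ α ≤ (n:ℝ) ^ α :=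
      Real.rpow_le_rpow (by positivity) h1 hα.le
    rwa [← Real.rpow_mul (by positivity), one_div, inv_mul_cancel₀ hα.ne',
      Real.rpow_one] at h2
  have hq : c / (n:ℝ) ^ α ≤ 1/2 := by
    rw [div_le_div_iff₀ (by positivity) (by norm_num)]
    nlinarith [Real.rpow_pos_of_pos hn0 α]
  obtain ⟨N, hN⟩ := exists_nat_ge (((n:ℝ) + 1) / α)
  have hbound : ∀ k : ℕ, N ≤ k →
      c ^ k / Real.Gamma (α * k + 1) ≤ ((n:ℝ) ^ (n:ℝ) / n.factorial) * (1/2) ^ k := by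
    intro k hk
    have hαk : (n:ℝ) + 1 < α * k + 1 := by
      have h1 : ((n:ℝ) + 1) / α ≤ (k:ℝ) := le_trans hN (by exact_mod_cast hk)
      have := (div_le_iff₀ hα).mp h1
      nlinarith
    have hΓ := gamma_lower n hn1 hαk
    have hΓpos : (0:ℝ) < Real.Gamma (α * k + 1) := Real.Gamma_pos_of_pos (by positivity)
    have hnfac : (0:ℝ) < n.factorial := by exact_mod_cast n.factorial_pos
    have hrw : (n.factorial : ℝ) * (n : ℝ) ^ (α * k + 1 - ((n:ℝ) + 1))
        = (n.factorial : ℝ) / (n:ℝ) ^ (n:ℝ) * ((n:ℝ) ^ α) ^ k := by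
      rw [show α * k + 1 - ((n:ℝ)+1) = α * k - n by ring,
        Real.rpow_sub hn0, ← Real.rpow_natCast ((n:ℝ) ^ α) k,
        ← Real.rpow_mul hn0.le, Real.rpow_natCast (n:ℝ) n]
      push_cast
      ring
    calc c ^ k / Real.Gamma (α * k + 1)
        ≤ c ^ k / ((n.factorial : ℝ) * (n : ℝ) ^ (α * k + 1 - ((n:ℝ) + 1))) :=
          div_le_div_of_nonneg_left (by positivity) (by rw [hrw]; positivity) hΓ
      _ = ((n:ℝ) ^ (n:ℝ) / n.factorial) * (c / (n:ℝ) ^ α) ^ k := by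
          rw [hrw, div_pow]
          field_simp
      _ ≤ ((n:ℝ) ^ (n:ℝ) / n.factorial) * (1/2) ^ k := by
          apply mul_le_mul_of_nonneg_left _ (by positivity)
          exact pow_le_pow_left₀ (by positivity) hq k
  rw [← summable_nat_add_iff N]
  refine Summable.of_nonneg_of_le (fun k => by positivity) (fun k => ?_)
    (((summable_geometric_of_lt_one (r := (1/2:ℝ)) (by norm_num) (by norm_num)).mul_left
      (((n:ℝ) ^ (n:ℝ) / n.factorial))))
  refine (hbound (k + N) (Nat.le_add_left N k)).trans ?_
  apply mul_le_mul_of_nonneg_left _ (by positivity)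
  apply pow_le_pow_of_le_one (by norm_num) (by norm_num)
  omega

lemma integrableOn_rpow_exp_rpow {p q : ℝ} (hp : 0 < p) (hq : -1 < q) :
    IntegrableOn (fun x : ℝ => x ^ q * Real.exp (-x ^ p)) (Ioi 0) := by
  have h0 : 0 < (q+1)/p := div_pos (by linarith) hp
  have h := (integrableOn_Ioi_comp_rpow_iff'
      (fun x => Real.exp (-x) * x ^ ((q+1)/p - 1)) hp.ne').mpr
    (Real.GammaIntegral_convergent h0)
  refine h.congr_fun (fun x hx => ?_) measurableSet_Ioi
  have hx0 : (0:ℝ) < x := hx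
  have : (x ^ p) ^ ((q+1)/p - 1) = x ^ (q + 1 - p) := by
    rw [← Real.rpow_mul hx0.le]
    congr 1
    field_simp
  simp only [smul_eq_mul, this]
  rw [mul_comm (Real.exp (-x ^ p)), ← mul_assoc, ← Real.rpow_add hx0]
  ring_nf

lemma integrableOn_rpow_exp_neg_mul {a r : ℝ} (ha : 0 < a) (hr : 0 < r) :
    IntegrableOn (fun t : ℝ => t ^ (a-1) * Real.exp (-(r * t))) (Ioi 0) := by
  have h2 : IntegrableOn (fun t : ℝ => Real.exp (-(r*t)) * (r*t) ^ (a-1)) (Ioi 0) := by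
    have := (integrableOn_Ioi_comp_mul_left_iff
        (fun x : ℝ => Real.exp (-x) * x ^ (a-1)) 0 hr).mpr
      (by simpa using Real.GammaIntegral_convergent ha)
    simpa using this
  have h3 := h2.const_mul (r ^ (1-a))
  refine IntegrableOn.congr_fun h3 (fun t ht => ?_) measurableSet_Ioi
  have ht0 : (0:ℝ) < t := ht
  rw [Real.mul_rpow hr.le ht0.le, show r ^ (1-a) * (Real.exp (-(r*t)) * (r ^ (a-1) * t ^ (a-1)))
      = (r ^ (1-a) * r ^ (a-1)) * (t ^ (a-1) * Real.exp (-(r*t))) by ring, ← Real.rpow_add hr]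
  norm_num


/-- The one-parameter Mittag-Leffler function `E_α(x) = ∑ x^k / Γ(αk+1)`. -/
noncomputable def mittagLeffler (α x : ℝ) : ℝ :=
  ∑' k : ℕ, x ^ k / Real.Gamma (α * k + 1)

theorem mittagLeffler_integral_representation (α lam : ℝ) (hα : 0 < α) (hα1 : α < 1)
    (hlam : 0 < lam) (f : ℝ → ℝ)
    (hf_nonneg : ∀ x > (0 : ℝ), 0 ≤ f x)
    (hf_prob : ∫ x in Set.Ioi (0 : ℝ), f x = 1)
    (hf_lt : ∀ s > (0 : ℝ),
      ∫ t in Set.Ioi (0 : ℝ), Real.exp (-(s * t)) * f t = Real.exp (-(s ^ α))) :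
    ∀ x > (0 : ℝ),
      α * mittagLeffler α (-(lam * x ^ α)) =
        x * ∫ t in Set.Ioi (0 : ℝ),
          f (x * t ^ (-(1 / α))) * t ^ (-(1 / α)) * t⁻¹ * Real.exp (-(lam * t)) := by
  intro x hx
  set c : ℝ := lam * x ^ α with hc_def
  have hc : 0 < c := mul_pos hlam (Real.rpow_pos_of_pos hx α)
  -- f is integrable on Ioi 0
  have hIntf : IntegrableOn f (Ioi 0) := by
    by_contra h
    rw [MeasureTheory.integral_undef h] at hf_prob
    norm_num at hf_prob
  -- measurable nonnegative representative g
  obtain ⟨g, hgm, hg0, hfg⟩ :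
      ∃ g : ℝ → ℝ, Measurable g ∧ (∀ u, 0 ≤ g u) ∧ f =ᵐ[volume.restrict (Ioi 0)] g := by
    refine ⟨fun u => max (hIntf.1.mk f u) 0,
      (hIntf.1.stronglyMeasurable_mk.measurable).max measurable_const,
      fun u => le_max_right _ _, ?_⟩
    filter_upwards [hIntf.1.ae_eq_mk,
      (ae_restrict_iff' measurableSet_Ioi).mpr
        (Filter.Eventually.of_forall (fun u hu => hf_nonneg u hu)),
      self_mem_ae_restrict measurableSet_Ioi] with u h1 h2 h3
    rw [← h1, max_eq_left h2]
  have hgInt : IntegrableOn g (Ioi 0) := hIntf.congr hfg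
  have hg_prob : ∫ u in Ioi 0, g u = 1 := by
    rw [← integral_congr_ae hfg]; exact hf_prob
  have hg_lap_int : ∀ s : ℝ, 0 < s →
      IntegrableOn (fun t => Real.exp (-(s*t)) * g t) (Ioi 0) := by
    intro s hs
    have h1 : IntegrableOn (fun t => Real.exp (-(s*t)) * f t) (Ioi 0) := by
      by_contra h
      have := hf_lt s hs
      rw [MeasureTheory.integral_undef h] at this
      exact (Real.exp_pos _).ne' this.symm
    exact h1.congr (by filter_upwards [hfg] with t ht; rw [ht])
  have hg_lap : ∀ s : ℝ, 0 < s →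
      ∫ t in Ioi 0, Real.exp (-(s*t)) * g t = Real.exp (-(s ^ α)) := by
    intro s hs
    have heq := integral_congr_ae (μ := volume.restrict (Ioi 0))
      (f := fun t => Real.exp (-(s*t)) * f t) (g := fun t => Real.exp (-(s*t)) * g t)
      (by filter_upwards [hfg] with t ht; rw [ht])
    rw [← heq]
    exact hf_lt s hs
  -- Laplace transform as lintegral
  have hg_lap_lint : ∀ s : ℝ, 0 < s →
      ∫⁻ u in Ioi 0, ENNReal.ofReal (Real.exp (-(s*u)) * g u)
        = ENNReal.ofReal (Real.exp (-(s ^ α))) := by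
    intro s hs
    rw [← MeasureTheory.ofReal_integral_eq_lintegral_ofReal (hg_lap_int s hs)
      (Filter.Eventually.of_forall (fun u => mul_nonneg (Real.exp_pos _).le (hg0 u))),
      hg_lap s hs]
  -- moments (lintegral version)
  have moment : ∀ k : ℕ,
      ∫⁻ u in Ioi 0, ENNReal.ofReal (g u * u ^ (-(α * k)))
        = ENNReal.ofReal (k.factorial / Real.Gamma (α * k + 1)) := by
    intro k
    rcases Nat.eq_zero_or_pos k with rfl | hk
    · simp only [Nat.cast_zero, mul_zero, neg_zero, Real.rpow_zero, mul_one,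
        Nat.factorial_zero, Nat.cast_one, zero_add, Real.Gamma_one, div_one]
      rw [← MeasureTheory.ofReal_integral_eq_lintegral_ofReal hgInt
        (Filter.Eventually.of_forall hg0), hg_prob]
    · set a : ℝ := α * k with ha_def
      have hk1 : (1:ℝ) ≤ (k:ℝ) := by exact_mod_cast hk
      have ha : 0 < a := mul_pos hα (by exact_mod_cast hk)
      clear_value a
      have hΓa : 0 < Real.Gamma a := Real.Gamma_pos_of_pos ha
      have hlapint : ∀ u : ℝ, 0 < u →
          IntegrableOn (fun s : ℝ => s ^ (a-1) * Real.exp (-(s*u))) (Ioi 0) := by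
        intro u hu
        exact (integrableOn_rpow_exp_neg_mul ha hu).congr_fun
          (fun s _ => by beta_reduce; rw [mul_comm u s]) measurableSet_Ioi
      have hrep : ∀ u : ℝ, 0 < u →
          ∫⁻ s in Ioi 0, ENNReal.ofReal (s ^ (a-1) * Real.exp (-(s*u)))
            = ENNReal.ofReal (Real.Gamma a * u ^ (-a)) := by
        intro u hu
        rw [← MeasureTheory.ofReal_integral_eq_lintegral_ofReal (hlapint u hu)
          ((ae_restrict_iff' measurableSet_Ioi).mpr (Filter.Eventually.of_forall
            (fun s hs => mul_nonneg (Real.rpow_nonneg (le_of_lt hs) _) (Real.exp_pos _).le)))]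
        congr 1
        have h1 : (∫ s in Ioi (0:ℝ), s ^ (a-1) * Real.exp (-(s*u)))
            = ∫ s in Ioi (0:ℝ), s ^ (a-1) * Real.exp (-(u*s)) := by
          refine setIntegral_congr_fun measurableSet_Ioi (fun s _ => ?_)
          rw [mul_comm s u]
        rw [h1, integral_rpow_mul_exp_neg_mul_Ioi ha hu, one_div,
          Real.inv_rpow hu.le, ← Real.rpow_neg hu.le, mul_comm]
      have measur : Measurable (Function.uncurry fun u s : ℝ =>
          ENNReal.ofReal (g u) * ENNReal.ofReal (s ^ (a-1) * Real.exp (-(s*u)))) := by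
        refine Measurable.mul (f := fun p : ℝ × ℝ => ENNReal.ofReal (g p.1))
          (g := fun p : ℝ × ℝ => ENNReal.ofReal (p.2 ^ (a-1) * Real.exp (-(p.2*p.1)))) ?_ ?_
        · exact (hgm.comp measurable_fst).ennreal_ofReal
        · apply Measurable.ennreal_ofReal
          fun_prop
      have key : ENNReal.ofReal (Real.Gamma a)
            * ∫⁻ u in Ioi 0, ENNReal.ofReal (g u * u ^ (-a))
          = ENNReal.ofReal ((1/α) * Real.Gamma k) := by
        calc ENNReal.ofReal (Real.Gamma a) * ∫⁻ u in Ioi 0, ENNReal.ofReal (g u * u ^ (-a))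
            = ∫⁻ u in Ioi 0, ENNReal.ofReal (Real.Gamma a) * ENNReal.ofReal (g u * u ^ (-a)) :=
              (lintegral_const_mul' _ _ ENNReal.ofReal_ne_top).symm
          _ = ∫⁻ u in Ioi 0, ∫⁻ s in Ioi 0,
                ENNReal.ofReal (g u) * ENNReal.ofReal (s ^ (a-1) * Real.exp (-(s*u))) := by
              refine setLIntegral_congr_fun_ae measurableSet_Ioi
                (Filter.Eventually.of_forall (fun u hu => ?_))
              rw [lintegral_const_mul' _ _ ENNReal.ofReal_ne_top, hrep u hu,
                ← ENNReal.ofReal_mul (Real.Gamma_nonneg_of_nonneg ha.le),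
                ← ENNReal.ofReal_mul (hg0 u)]
              congr 1
              ring
          _ = ∫⁻ s in Ioi 0, ∫⁻ u in Ioi 0,
                ENNReal.ofReal (g u) * ENNReal.ofReal (s ^ (a-1) * Real.exp (-(s*u))) :=
              lintegral_lintegral_swap measur.aemeasurable
          _ = ∫⁻ s in Ioi 0, ENNReal.ofReal (s ^ (a-1)) * ENNReal.ofReal (Real.exp (-(s ^ α))) := by
              refine setLIntegral_congr_fun_ae measurableSet_Ioi
                (Filter.Eventually.of_forall (fun s hs => ?_))
              have h2 : ∀ u : ℝ, ENNReal.ofReal (g u)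
                    * ENNReal.ofReal (s ^ (a-1) * Real.exp (-(s*u)))
                  = ENNReal.ofReal (s ^ (a-1)) * ENNReal.ofReal (Real.exp (-(s*u)) * g u) := by
                intro u
                rw [← ENNReal.ofReal_mul (hg0 u),
                  ← ENNReal.ofReal_mul (Real.rpow_nonneg (le_of_lt hs) _)]
                congr 1
                ring
              simp_rw [h2]
              rw [lintegral_const_mul' _ _ ENNReal.ofReal_ne_top, hg_lap_lint s hs]
          _ = ∫⁻ s in Ioi 0, ENNReal.ofReal (s ^ (a-1) * Real.exp (-s ^ α)) := by
              refine setLIntegral_congr_fun_ae measurableSet_Ioi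
                (Filter.Eventually.of_forall (fun s hs => ?_))
              rw [← ENNReal.ofReal_mul (Real.rpow_nonneg (le_of_lt hs) _)]
          _ = ENNReal.ofReal (∫ s in Ioi 0, s ^ (a-1) * Real.exp (-s ^ α)) :=
              (MeasureTheory.ofReal_integral_eq_lintegral_ofReal
                (integrableOn_rpow_exp_rpow hα (by linarith))
                ((ae_restrict_iff' measurableSet_Ioi).mpr (Filter.Eventually.of_forall
                  (fun s hs => mul_nonneg (Real.rpow_nonneg (le_of_lt hs) _)
                    (Real.exp_pos _).le)))).symm
          _ = ENNReal.ofReal ((1/α) * Real.Gamma k) := by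
              rw [integral_rpow_mul_exp_neg_rpow hα (by linarith : (-1:ℝ) < a - 1)]
              congr 2
              rw [sub_add_cancel, ha_def]
              field_simp
      have hΓk : Real.Gamma ((k:ℝ)) = (k-1).factorial := by
        obtain ⟨m, rfl⟩ : ∃ m, k = m + 1 := ⟨k - 1, by omega⟩
        have hcast : (((m+1 : ℕ)):ℝ) = ((m:ℕ):ℝ) + 1 := by push_cast; ring
        rw [hcast, Real.Gamma_nat_eq_factorial]
        norm_num
      have hreal : (1/α) * Real.Gamma k
          = Real.Gamma a * ((k.factorial : ℝ) / Real.Gamma (a + 1)) := by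
        rw [Real.Gamma_add_one ha.ne', hΓk]
        have hfaceqN : k.factorial = k * (k-1).factorial := by
          cases k with
          | zero => omega
          | succ n => simp [Nat.factorial_succ]
        have hfaceq : (k.factorial : ℝ) = k * (k-1).factorial := by exact_mod_cast hfaceqN
        have hk0 : ((k:ℝ)) ≠ 0 := by positivity
        rw [hfaceq, ha_def]
        field_simp
      rw [hreal, ENNReal.ofReal_mul hΓa.le] at key
      have hne : ENNReal.ofReal (Real.Gamma a) ≠ 0 := (ENNReal.ofReal_pos.mpr hΓa).ne'
      have := congrArg (fun z => (ENNReal.ofReal (Real.Gamma a))⁻¹ * z) key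
      simpa [← mul_assoc, ENNReal.inv_mul_cancel hne ENNReal.ofReal_ne_top, one_mul]
        using this
  -- real moments
  have momentR : ∀ k : ℕ, ∫ u in Ioi 0, g u * u ^ (-(α * k))
      = (k.factorial : ℝ) / Real.Gamma (α * k + 1) := by
    intro k
    have hmeas : AEStronglyMeasurable (fun u : ℝ => g u * u ^ (-(α * k)))
        (volume.restrict (Ioi 0)) := by
      apply Measurable.aestronglyMeasurable
      fun_prop
    have hnn : 0 ≤ᵐ[volume.restrict (Ioi 0)] fun u : ℝ => g u * u ^ (-(α * k)) := by
      filter_upwards [self_mem_ae_restrict measurableSet_Ioi] with u hu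
      exact mul_nonneg (hg0 u) (Real.rpow_nonneg (le_of_lt hu) _)
    rw [MeasureTheory.integral_eq_lintegral_of_nonneg_ae hnn hmeas, moment k,
      ENNReal.toReal_ofReal]
    have h0 : (0:ℝ) ≤ α * k := mul_nonneg hα.le (Nat.cast_nonneg k)
    exact div_nonneg (Nat.cast_nonneg _) (Real.Gamma_nonneg_of_nonneg (by linarith))
  have hΓpos : ∀ k : ℕ, 0 < Real.Gamma (α * k + 1) := by
    intro k
    have h0 : (0:ℝ) ≤ α * k := mul_nonneg hα.le (Nat.cast_nonneg k)
    exact Real.Gamma_pos_of_pos (by linarith)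
  -- series expansion of the integral
  have hML : ∫ u in Ioi 0, g u * Real.exp (-(c * u ^ (-α)))
      = ∑' k : ℕ, (-c) ^ k / Real.Gamma (α * k + 1) := by
    have hmeask : ∀ k : ℕ, AEStronglyMeasurable
        (fun u : ℝ => g u * ((-(c * u ^ (-α))) ^ k / k.factorial))
        (volume.restrict (Ioi 0)) := by
      intro k
      apply Measurable.aestronglyMeasurable
      fun_prop
    have hnormk : ∀ k : ℕ, (∫⁻ u in Ioi 0, ‖g u * ((-(c * u ^ (-α))) ^ k / k.factorial)‖₊)
        = ENNReal.ofReal (c ^ k / Real.Gamma (α * k + 1)) := by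
      intro k
      have h1 : ∀ u ∈ Ioi (0:ℝ), (‖g u * ((-(c * u ^ (-α))) ^ k / k.factorial)‖₊ : ℝ≥0∞)
          = ENNReal.ofReal (c ^ k / k.factorial) * ENNReal.ofReal (g u * u ^ (-(α * k))) := by
        intro u hu
        rw [← enorm_eq_nnnorm, ← ofReal_norm, ← ENNReal.ofReal_mul (by positivity)]
        congr 1
        have h2 : (c * u ^ (-α:ℝ)) ^ k = c ^ k * u ^ (-(α * k)) := by
          rw [mul_pow, ← Real.rpow_natCast (u ^ (-α:ℝ)) k, ← Real.rpow_mul (le_of_lt hu)]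
          ring_nf
        rw [Real.norm_eq_abs, abs_mul, abs_of_nonneg (hg0 u), abs_div, abs_pow, abs_neg,
          abs_of_nonneg (mul_nonneg hc.le (Real.rpow_nonneg (le_of_lt hu) _)),
          abs_of_nonneg (Nat.cast_nonneg (α := ℝ) k.factorial), h2]
        ring
      rw [setLIntegral_congr_fun_ae measurableSet_Ioi (Filter.Eventually.of_forall h1),
        lintegral_const_mul' _ _ ENNReal.ofReal_ne_top, moment k,
        ← ENNReal.ofReal_mul (by positivity)]
      congr 1
      have hkf : ((k.factorial : ℝ)) ≠ 0 := by positivity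
      field_simp
    have hfin : (∑' k : ℕ, ∫⁻ u in Ioi 0, ‖g u * ((-(c * u ^ (-α))) ^ k / k.factorial)‖₊) ≠ ⊤ := by
      simp_rw [hnormk]
      rw [← ENNReal.ofReal_tsum_of_nonneg
        (fun k => div_nonneg (pow_nonneg hc.le k) (hΓpos k).le) (summable_ml hα hc.le)]
      exact ENNReal.ofReal_ne_top
    have hsum := MeasureTheory.integral_tsum (μ := volume.restrict (Ioi 0))
      (f := fun (k : ℕ) (u : ℝ) => g u * ((-(c * u ^ (-α))) ^ k / k.factorial)) hmeask hfin
    have hexp : ∀ u : ℝ, (∑' k : ℕ, g u * ((-(c * u ^ (-α))) ^ k / k.factorial))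
        = g u * Real.exp (-(c * u ^ (-α))) := by
      intro u
      rw [tsum_mul_left]
      congr 1
      rw [Real.exp_eq_exp_ℝ, NormedSpace.exp_eq_tsum_div]
    have hterm : ∀ k : ℕ, (∫ u in Ioi 0, g u * ((-(c * u ^ (-α))) ^ k / k.factorial))
        = (-c) ^ k / Real.Gamma (α * k + 1) := by
      intro k
      have h3 : ∀ u ∈ Ioi (0:ℝ), g u * ((-(c * u ^ (-α))) ^ k / k.factorial)
          = ((-c) ^ k / k.factorial) * (g u * u ^ (-(α * k))) := by
        intro u hu
        have h2 : (-(c * u ^ (-α:ℝ))) ^ k = (-c) ^ k * u ^ (-(α * k)) := by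
          rw [show -(c * u ^ (-α:ℝ)) = (-c) * u ^ (-α:ℝ) by ring, mul_pow,
            ← Real.rpow_natCast (u ^ (-α:ℝ)) k, ← Real.rpow_mul (le_of_lt hu)]
          ring_nf
        rw [h2]
        ring
      rw [setIntegral_congr_fun measurableSet_Ioi h3, MeasureTheory.integral_const_mul,
        momentR k]
      have hkf : ((k.factorial : ℝ)) ≠ 0 := by positivity
      field_simp
    calc ∫ u in Ioi 0, g u * Real.exp (-(c * u ^ (-α)))
        = ∫ u in Ioi 0, ∑' k : ℕ, g u * ((-(c * u ^ (-α))) ^ k / k.factorial) :=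
          integral_congr_ae (Filter.Eventually.of_forall (fun u => (hexp u).symm))
      _ = ∑' k : ℕ, ∫ u in Ioi 0, g u * ((-(c * u ^ (-α))) ^ k / k.factorial) := hsum
      _ = ∑' k : ℕ, (-c) ^ k / Real.Gamma (α * k + 1) := tsum_congr hterm
  -- change of variables in the RHS integral
  have hB : x * (∫ t in Ioi 0,
        f (x * t ^ (-(1 / α))) * t ^ (-(1 / α)) * t⁻¹ * Real.exp (-(lam * t)))
      = α * ∫ u in Ioi 0, f u * Real.exp (-(c * u ^ (-α))) := by
    have hneg : (-α) ≠ 0 := neg_ne_zero.mpr hα.ne'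
    rw [← integral_comp_rpow_Ioi
      (fun t => f (x * t ^ (-(1 / α))) * t ^ (-(1 / α)) * t⁻¹ * Real.exp (-(lam * t))) hneg]
    have key : ∀ s ∈ Ioi (0:ℝ),
        (|(-α)| * s ^ ((-α) - 1)) • ((fun t =>
            f (x * t ^ (-(1 / α))) * t ^ (-(1 / α)) * t⁻¹ * Real.exp (-(lam * t))) (s ^ (-α)))
        = α * ((fun u => f u * Real.exp (-(c * u ^ (-α)))) (x * s)) := by
      intro s hs
      have hs0 : (0:ℝ) < s := hs
      have e1 : ((s : ℝ) ^ (-α : ℝ)) ^ (-(1 / α)) = s := by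
        rw [← Real.rpow_mul hs0.le, show (-α) * (-(1/α)) = α * (1/α) by ring,
          mul_one_div_cancel hα.ne', Real.rpow_one]
      have e2 : ((s : ℝ) ^ (-α:ℝ))⁻¹ = s ^ α := by
        rw [Real.rpow_neg hs0.le, inv_inv]
      have e3 : c * (x * s) ^ (-α:ℝ) = lam * s ^ (-α:ℝ) := by
        rw [Real.mul_rpow (le_of_lt hx) hs0.le, hc_def,
          show lam * x ^ α * (x ^ (-α:ℝ) * s ^ (-α:ℝ))
            = lam * (x ^ (α + -α)) * s ^ (-α:ℝ) by rw [Real.rpow_add hx]; ring]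
        norm_num
      simp only [smul_eq_mul]
      rw [e1, e2, e3, abs_neg, abs_of_pos hα]
      have e4 : s ^ ((-α:ℝ) - 1) * (s * s ^ (α:ℝ)) = 1 := by
        rw [show s * s ^ (α:ℝ) = s ^ (1 + α) from by rw [Real.rpow_add hs0, Real.rpow_one],
          ← Real.rpow_add hs0, show (-α:ℝ) - 1 + (1 + α) = 0 by ring, Real.rpow_zero]
      calc α * s ^ ((-α:ℝ) - 1) *
            (f (x * s) * s * s ^ (α:ℝ) * Real.exp (-(lam * s ^ (-α:ℝ))))
          = (s ^ ((-α:ℝ) - 1) * (s * s ^ (α:ℝ)))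
              * (α * (f (x * s) * Real.exp (-(lam * s ^ (-α:ℝ))))) := by ring
        _ = α * (f (x * s) * Real.exp (-(lam * s ^ (-α:ℝ)))) := by rw [e4, one_mul]
    rw [setIntegral_congr_fun measurableSet_Ioi key, MeasureTheory.integral_const_mul,
      integral_comp_mul_left_Ioi (fun u => f u * Real.exp (-(c * u ^ (-α)))) 0 hx]
    simp only [mul_zero, smul_eq_mul]
    field_simp
  -- assemble
  have hfg2 : ∫ u in Ioi 0, f u * Real.exp (-(c * u ^ (-α)))
      = ∫ u in Ioi 0, g u * Real.exp (-(c * u ^ (-α))) :=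
    integral_congr_ae (by filter_upwards [hfg] with u hu; rw [hu])
  rw [hB, hfg2, hML, mittagLeffler]
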